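/- Let α, β, γ > 0 and let f : (0,∞) → ℝ be given by f(x) = (α + βx)^(−γ). Then for every integer n ≥ 1 and all pairwise distinct x_1, …, x_n ∈ (0,∞), one has 0 < Σ_{i=1}^n f(x_i) / Π_{j≠i} (x_j − x_i) < α^(−(γ+n−1)) β^(n−1) (Π_{k=0}^{n−2} (γ + k)) / (n−1)!. -/

import Mathlib

open Finset Set Polynomial

open Finset Set Polynomial

lemma rolle_step (h h' : ℝ → ℝ) (hd : ∀ t : ℝ, 0 < t → HasDerivAt h (h' t) t) (n : ℕ) :
    ∀ s : Finset ℝ, s.card = n → (∀ t ∈ s, 0 < t) → (∀ t ∈ s, h t = 0) →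
    ∃ s' : Finset ℝ, s'.card = n - 1 ∧ (∀ t ∈ s', h' t = 0) ∧
      (∀ t ∈ s', ∃ u ∈ s, u < t) := by
  induction n with
  | zero => exact fun s _ _ _ => ⟨∅, by simp⟩
  | succ n ih =>
    intro s hcard hpos hzero
    rcases n.eq_zero_or_pos with rfl | hn
    · exact ⟨∅, by simp⟩
    have hne : s.Nonempty := by rw [← Finset.card_pos, hcard]; omega
    set a := s.min' hne with ha_def
    have ha : a ∈ s := s.min'_mem hne
    set s₂ := s.erase a with hs₂def
    have hs₂card : s₂.card = n := by rw [hs₂def, Finset.card_erase_of_mem ha, hcard]; omega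
    have hne₂ : s₂.Nonempty := by rw [← Finset.card_pos, hs₂card]; omega
    set b := s₂.min' hne₂ with hb_def
    have hb₂ : b ∈ s₂ := s₂.min'_mem hne₂
    have hbs : b ∈ s := Finset.mem_of_mem_erase hb₂
    have hab : a < b :=
      lt_of_le_of_ne (s.min'_le b hbs) (Ne.symm (Finset.ne_of_mem_erase hb₂))
    have hapos : 0 < a := hpos a ha
    have hcont : ContinuousOn h (Set.Icc a b) := fun t ht =>
      ((hd t (lt_of_lt_of_le hapos ht.1)).continuousAt).continuousWithinAt
    obtain ⟨c, hc, hc0⟩ := exists_hasDerivAt_eq_zero hab hcont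
      (by rw [hzero a ha, hzero b hbs])
      (fun t ht => hd t (lt_trans hapos ht.1))
    obtain ⟨s'', h1, h2, h3⟩ := ih s₂ hs₂card
      (fun t ht => hpos t (Finset.mem_of_mem_erase ht))
      (fun t ht => hzero t (Finset.mem_of_mem_erase ht))
    have hcnot : c ∉ s'' := by
      intro hcmem
      obtain ⟨u, hu, huc⟩ := h3 c hcmem
      exact absurd (lt_trans hc.2 (lt_of_le_of_lt (s₂.min'_le u hu) huc)) (lt_irrefl c)
    refine ⟨insert c s'', ?_, ?_, ?_⟩
    · rw [Finset.card_insert_of_notMem hcnot, h1]; omega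
    · intro t ht
      rcases Finset.mem_insert.mp ht with rfl | ht'
      · exact hc0
      · exact h2 t ht'
    · intro t ht
      rcases Finset.mem_insert.mp ht with rfl | ht'
      · exact ⟨a, ha, hc.1⟩
      · obtain ⟨u, hu, hut⟩ := h3 t ht'
        exact ⟨u, Finset.mem_of_mem_erase hu, hut⟩

lemma gen_rolle : ∀ (k : ℕ) (g : ℕ → ℝ → ℝ),
    (∀ j, ∀ t : ℝ, 0 < t → HasDerivAt (g j) (g (j+1) t) t) →
    ∀ s : Finset ℝ, s.card = k + 1 → (∀ t ∈ s, 0 < t) → (∀ t ∈ s, g 0 t = 0) →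
    ∃ ξ : ℝ, 0 < ξ ∧ g k ξ = 0 := by
  intro k
  induction k with
  | zero =>
    intro g _ s hcard hpos hzero
    have hne : s.Nonempty := by rw [← Finset.card_pos, hcard]; omega
    obtain ⟨t, ht⟩ := hne
    exact ⟨t, hpos t ht, hzero t ht⟩
  | succ k ih =>
    intro g hd s hcard hpos hzero
    obtain ⟨s', h1, h2, h3⟩ := rolle_step (g 0) (g 1) (hd 0) (k+2) s hcard hpos hzero
    refine ih (fun j => g (j+1)) (fun j t ht => hd (j+1) t ht) s' (by omega) ?_ h2
    intro t ht
    obtain ⟨u, hu, hut⟩ := h3 t ht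
    exact lt_trans (hpos u hu) hut

noncomputable def Dfam (α β γ : ℝ) (k : ℕ) : ℝ → ℝ :=
  fun t => (-1)^k * β^k * (∏ j ∈ Finset.range k, (γ + j)) * (α + β*t) ^ (-γ - k)

lemma hasDerivAt_Dfam (α β γ : ℝ) (hα : 0 < α) (hβ : 0 < β) (k : ℕ) (t : ℝ) (ht : 0 < t) :
    HasDerivAt (Dfam α β γ k) (Dfam α β γ (k+1) t) t := by
  have hpos : (0:ℝ) < α + β * t := by positivity
  have h1 : HasDerivAt (fun t : ℝ => α + β * t) β t := by
    simpa using ((hasDerivAt_id t).const_mul β).const_add α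
  have h2 : HasDerivAt (fun y : ℝ => y ^ (-γ - k)) ((-γ-k) * (α+β*t)^(-γ-k-1)) (α+β*t) :=
    Real.hasDerivAt_rpow_const (Or.inl hpos.ne')
  have h3 := (h2.comp t h1).const_mul ((-1)^k * β^k * (∏ j ∈ Finset.range k, (γ + j)))
  have h3' : HasDerivAt (Dfam α β γ k) (((-1)^k * β^k * (∏ j ∈ Finset.range k, (γ + j))) * ((-γ-k) * (α+β*t)^(-γ-k-1) * β)) t := h3
  convert h3' using 1
  show Dfam α β γ (k+1) t = _
  unfold Dfam
  rw [Finset.prod_range_succ]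
  have he1 : -γ - ((k:ℕ)+1 : ℕ) = (-γ - k) - 1 := by push_cast; ring
  rw [he1]
  push_cast
  ring

lemma leadingCoeff_lagrange_basis {n : ℕ} (x : Fin n → ℝ) (hinj : Function.Injective x)
    (i : Fin n) :
    (Lagrange.basis Finset.univ x i).leadingCoeff = ∏ j ∈ Finset.univ.erase i, (x i - x j)⁻¹ := by
  rw [Lagrange.basis, Polynomial.leadingCoeff_prod]
  refine Finset.prod_congr rfl fun j hj => ?_
  have hne : x i - x j ≠ 0 := sub_ne_zero.mpr (fun h => (Finset.mem_erase.mp hj).1 (hinj h).symm)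
  rw [Lagrange.basisDivisor, Polynomial.leadingCoeff_mul, Polynomial.leadingCoeff_C,
    Polynomial.leadingCoeff_X_sub_C, mul_one]

lemma interpolate_coeff {n : ℕ} (hn : 1 ≤ n) (x : Fin n → ℝ) (hinj : Function.Injective x)
    (r : Fin n → ℝ) :
    (Lagrange.interpolate Finset.univ x r).coeff (n-1) =
      ∑ i, r i * ∏ j ∈ Finset.univ.erase i, (x i - x j)⁻¹ := by
  rw [Lagrange.interpolate_apply, Polynomial.finset_sum_coeff]
  refine Finset.sum_congr rfl fun i _ => ?_
  rw [Polynomial.coeff_C_mul]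
  congr 1
  have hdeg : (Lagrange.basis Finset.univ x i).natDegree = n - 1 := by
    rw [Lagrange.natDegree_basis (Set.injOn_of_injective hinj) (Finset.mem_univ i),
      Finset.card_univ, Fintype.card_fin]
  rw [← hdeg, Polynomial.coeff_natDegree, leadingCoeff_lagrange_basis x hinj i]

lemma iterate_derivative_eval_of_degree_lt {n : ℕ} (hn : 1 ≤ n) (p : Polynomial ℝ)
    (hdeg : p.degree < n) (t : ℝ) :
    (Polynomial.derivative^[n-1] p).eval t = (n-1).factorial * p.coeff (n-1) := by
  have hnd : p.natDegree ≤ n - 1 := by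
    rcases eq_or_ne p 0 with rfl | hp
    · simp
    · have := (Polynomial.degree_eq_natDegree hp) ▸ hdeg
      exact_mod_cast by exact_mod_cast Nat.lt_succ_iff.mp (by
        have : (p.natDegree : ℕ) < n := by exact_mod_cast Nat.cast_lt.mp (by exact_mod_cast this)
        omega)
  have hq : (Polynomial.derivative^[n-1] p).natDegree = 0 := by
    have := Polynomial.natDegree_iterate_derivative p (n-1)
    omega
  rw [Polynomial.eq_C_of_natDegree_le_zero hq.le, Polynomial.eval_C,
    Polynomial.coeff_iterate_derivative, zero_add, Nat.descFactorial_self, nsmul_eq_mul]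

theorem rpow_neg_divided_difference_bounds (α β γ : ℝ) (hα : 0 < α) (hβ : 0 < β) (hγ : 0 < γ)
    (f : ℝ → ℝ) (hfdef : ∀ x ∈ Set.Ioi (0 : ℝ), f x = (α + β * x) ^ (-γ))
    (n : ℕ) (hn : 1 ≤ n) (x : Fin n → ℝ) (hx : ∀ i, x i ∈ Set.Ioi (0 : ℝ))
    (hinj : Function.Injective x) :
    0 < ∑ i, f (x i) / ∏ j ∈ Finset.univ.erase i, (x j - x i) ∧
    ∑ i, f (x i) / ∏ j ∈ Finset.univ.erase i, (x j - x i) <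
      α ^ (-(γ + n - 1)) * β ^ (n - 1) *
        (∏ k ∈ Finset.range (n - 1), (γ + k)) / (n - 1).factorial := by
  set m := n - 1 with hm
  set P : Polynomial ℝ := Lagrange.interpolate Finset.univ x (fun i => f (x i)) with hP
  have hinjOn : Set.InjOn x (Finset.univ : Finset (Fin n)) := Set.injOn_of_injective hinj
  have hcardu : (Finset.univ : Finset (Fin n)).card = n := by simp
  have hPdeg : P.degree < n := by
    have := Lagrange.degree_interpolate_lt (r := fun i => f (x i)) hinjOn
    rwa [hcardu] at this
  -- the function family
  set g : ℕ → ℝ → ℝ := fun j t => Dfam α β γ j t - (Polynomial.derivative^[j] P).eval t with hg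
  have hd : ∀ j, ∀ t : ℝ, 0 < t → HasDerivAt (g j) (g (j+1) t) t := by
    intro j t ht
    have h1 := hasDerivAt_Dfam α β γ hα hβ j t ht
    have h2 : HasDerivAt (fun s => (Polynomial.derivative^[j] P).eval s)
        ((Polynomial.derivative^[j+1] P).eval t) t := by
      rw [Function.iterate_succ_apply']
      exact (Polynomial.derivative^[j] P).hasDerivAt t
    exact h1.sub h2
  -- nodes
  set s : Finset ℝ := Finset.image x Finset.univ with hs
  have hscard : s.card = m + 1 := by
    rw [hs, Finset.card_image_of_injective _ hinj, hcardu]; omega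
  have hspos : ∀ t ∈ s, 0 < t := by
    intro t ht
    obtain ⟨i, _, rfl⟩ := Finset.mem_image.mp ht
    exact hx i
  have hszero : ∀ t ∈ s, g 0 t = 0 := by
    intro t ht
    obtain ⟨i, _, rfl⟩ := Finset.mem_image.mp ht
    have h1 : Dfam α β γ 0 (x i) = f (x i) := by
      rw [hfdef (x i) (hx i)]; simp [Dfam]
    have h2 : P.eval (x i) = f (x i) :=
      Lagrange.eval_interpolate_at_node (fun i => f (x i)) hinjOn (Finset.mem_univ i)
    simp [hg, h1, h2]
  obtain ⟨ξ, hξpos, hξ⟩ := gen_rolle m g hd s hscard hspos hszero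
  have hkey : Dfam α β γ m ξ = (m.factorial : ℝ) * P.coeff m := by
    have := sub_eq_zero.mp hξ
    rw [this, iterate_derivative_eval_of_degree_lt hn P hPdeg ξ]
  -- coefficient identity
  have hcoeff : P.coeff m = ∑ i, f (x i) * ∏ j ∈ Finset.univ.erase i, (x i - x j)⁻¹ :=
    interpolate_coeff hn x hinj _
  -- sign flip on products
  have hprodneg : ∀ i : Fin n, (∏ j ∈ Finset.univ.erase i, (x j - x i))
      = (-1:ℝ)^m * ∏ j ∈ Finset.univ.erase i, (x i - x j) := by
    intro i
    have hcarde : (Finset.univ.erase i).card = m := by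
      rw [Finset.card_erase_of_mem (Finset.mem_univ i), hcardu]
    calc (∏ j ∈ Finset.univ.erase i, (x j - x i))
        = ∏ j ∈ Finset.univ.erase i, (-1) * (x i - x j) := by
          refine Finset.prod_congr rfl fun j _ => by ring
      _ = (-1:ℝ)^m * ∏ j ∈ Finset.univ.erase i, (x i - x j) := by
          rw [Finset.prod_mul_distrib, Finset.prod_const, hcarde]
  have hQne : ∀ i : Fin n, (∏ j ∈ Finset.univ.erase i, (x i - x j)) ≠ 0 := by
    intro i
    refine Finset.prod_ne_zero_iff.mpr fun j hj => sub_ne_zero.mpr ?_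
    exact fun h => (Finset.mem_erase.mp hj).1 (hinj h.symm)
  have hc2 : ((-1:ℝ)^m) * ((-1:ℝ)^m) = 1 := by
    rw [← pow_add]; exact Even.neg_one_pow ⟨m, rfl⟩
  have key : ∀ i : Fin n, f (x i) / ∏ j ∈ Finset.univ.erase i, (x j - x i)
      = (-1:ℝ)^m * (f (x i) * ∏ j ∈ Finset.univ.erase i, (x i - x j)⁻¹) := by
    intro i
    rw [hprodneg i, Finset.prod_inv_distrib,
      div_eq_iff (mul_ne_zero (pow_ne_zero _ (by norm_num)) (hQne i))]
    have hinv : (∏ j ∈ Finset.univ.erase i, (x i - x j))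
        * (∏ j ∈ Finset.univ.erase i, (x i - x j))⁻¹ = 1 := mul_inv_cancel₀ (hQne i)
    set Q := ∏ j ∈ Finset.univ.erase i, (x i - x j)
    set c := (-1:ℝ)^m
    linear_combination (-(f (x i))) * hc2 - (f (x i) * c * c) * hinv
  -- assemble value of the sum
  set S := ∑ i, f (x i) / ∏ j ∈ Finset.univ.erase i, (x j - x i) with hS
  set Pr := ∏ k ∈ Finset.range m, (γ + (k:ℝ)) with hPr
  set E := (α + β * ξ) ^ (-γ - (m:ℝ)) with hE
  have hSval : S = β^m * Pr * E / m.factorial := by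
    have h1 : S = (-1:ℝ)^m * P.coeff m := by
      rw [hS, hcoeff, Finset.mul_sum]
      exact Finset.sum_congr rfl fun i _ => key i
    have h2 : P.coeff m = Dfam α β γ m ξ / m.factorial := by
      rw [hkey]; field_simp
    rw [h1, h2]
    show (-1:ℝ)^m * (((-1)^m * β^m * Pr * E) / m.factorial) = _
    field_simp
    linear_combination (Pr * E) * hc2
  have hPrpos : 0 < Pr := Finset.prod_pos fun k _ => by positivity
  have hEpos : 0 < E := Real.rpow_pos_of_pos (by positivity) _
  constructor
  · rw [hSval]; positivity
  · rw [hSval]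
    have hexp : -(γ + (n:ℝ) - 1) = -γ - (m:ℝ) := by
      rw [hm, Nat.cast_sub hn]; push_cast; ring
    rw [hexp]
    have hElt : E < α ^ (-γ - (m:ℝ)) := by
      rw [hE]
      apply Real.rpow_lt_rpow_of_neg hα (by nlinarith)
        (by have : (0:ℝ) ≤ (m:ℝ) := Nat.cast_nonneg m; linarith)
    calc β^m * Pr * E / m.factorial < β^m * Pr * α ^ (-γ - (m:ℝ)) / m.factorial := by
          gcongr
      _ = α ^ (-γ - (m:ℝ)) * β^m * Pr / m.factorial := by ring
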